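/- Let $M$ be a normal pseudomanifold of dimension $d \geq 2$ and let $A$ be a set of vertices of $M$ such that the induced subcomplex $M[A]$ is a $(d-1)$-dimensional normal pseudomanifold. Let $G$ be the graph whose vertices are the edges of $M$ with exactly one end in $A$, two such vertices being adjacent in $G$ if the union of the corresponding edges is a 2-dimensional face of $M$. Then $G$ has at most two connected components. -/

import Mathlib

open Finset

noncomputable section

attribute [local instance] Classical.propDecidable

variable {V : Type} [DecidableEq V]

/-- A (finite abstract) simplicial complex: a finite family of nonempty finite sets (faces)
closed under taking nonempty subsets. -/
def IsComplex (K : Finset (Finset V)) : Prop :=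
  (∀ s ∈ K, s.Nonempty) ∧ ∀ s ∈ K, ∀ t ⊆ s, t.Nonempty → t ∈ K

/-- The vertex set of a complex: the union of its faces. -/
def vertexSet (K : Finset (Finset V)) : Finset V := K.sup id

/-- A facet is a maximal face. -/
def IsFacet (K : Finset (Finset V)) (s : Finset V) : Prop :=
  s ∈ K ∧ ∀ t ∈ K, s ⊆ t → s = t

/-- A complex is pure of dimension `d` if it is nonempty and every facet has `d + 1` vertices. -/
def IsPure (K : Finset (Finset V)) (d : ℕ) : Prop :=
  K.Nonempty ∧ ∀ s, IsFacet K s → s.card = d + 1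

/-- The edge graph (1-skeleton) of a complex. -/
def edgeGraph (K : Finset (Finset V)) : SimpleGraph V where
  Adj x y := x ≠ y ∧ ({x, y} : Finset V) ∈ K
  symm := by
    constructor
    intro x y h
    refine ⟨h.1.symm, ?_⟩
    rw [Finset.pair_comm]
    exact h.2
  loopless := by
    constructor
    intro x h
    exact h.1 rfl

/-- A complex is connected if it has a vertex and any two of its vertices are joined by a
path in its edge graph. -/
def CConnected (K : Finset (Finset V)) : Prop :=
  (vertexSet K).Nonempty ∧
    ∀ u ∈ vertexSet K, ∀ v ∈ vertexSet K, (edgeGraph K).Reachable u v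

/-- The link of a face `α`: all faces `β` disjoint from `α` with `α ∪ β` a face. -/
def link (K : Finset (Finset V)) (α : Finset V) : Finset (Finset V) :=
  K.filter fun β => Disjoint α β ∧ α ∪ β ∈ K

/-- The number of edges (1-dimensional faces) of a complex. -/
def edgeCount (K : Finset (Finset V)) : ℕ := (K.filter fun s => s.card = 2).card

/-- A weak pseudomanifold of dimension `d`: a pure `d`-dimensional complex in which every
`(d-1)`-dimensional face lies in exactly two facets. -/
def IsWeakPM (K : Finset (Finset V)) (d : ℕ) : Prop :=
  IsComplex K ∧ IsPure K d ∧
    ∀ s ∈ K, s.card = d → (K.filter fun t => IsFacet K t ∧ s ⊆ t).card = 2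

/-- A normal `d`-pseudomanifold: a connected weak pseudomanifold of dimension `d` in which
the link of every face of dimension at most `d - 2` is connected. -/
def IsNormalPM (K : Finset (Finset V)) (d : ℕ) : Prop :=
  IsWeakPM K d ∧ CConnected K ∧
    ∀ s ∈ K, s.card ≤ d - 1 → CConnected (link K s)

/-- The standard `d`-sphere: the complex of all nonempty proper subsets of a `(d+2)`-set. -/
def IsStandardSphere (K : Finset (Finset V)) (d : ℕ) : Prop :=
  ∃ A : Finset V, A.card = d + 2 ∧ K = A.powerset.filter fun s => s.Nonempty ∧ s ≠ A

/-- `StarringOf X Y` : `Y` is obtained from `X` by starring a new vertex `v` in a facet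
`σ` of `X`, i.e. by replacing the facet `σ` with the cone with apex `v` over its boundary. -/
def StarringOf (X Y : Finset (Finset V)) : Prop :=
  ∃ (σ : Finset V) (v : V), IsFacet X σ ∧ v ∉ vertexSet X ∧
    Y = X.erase σ ∪ (σ.powerset.filter fun τ => τ ≠ σ).image fun τ => insert v τ

/-- A stacked `d`-sphere: a complex obtained from the standard `d`-sphere by a finite
sequence of starrings. -/
def IsStackedSphere (K : Finset (Finset V)) (d : ℕ) : Prop :=
  ∃ S : Finset (Finset V), IsStandardSphere S d ∧ Relation.ReflTransGen StarringOf S K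

/-- The induced subcomplex on a set `U` of vertices. -/
def induced (K : Finset (Finset V)) (U : Finset V) : Finset (Finset V) :=
  K.filter fun s => s ⊆ U

/-- The simplicial complement of the induced subcomplex on `U`: the induced subcomplex on
the complementary set of vertices. -/
def simpComplement (K : Finset (Finset V)) (U : Finset V) : Finset (Finset V) :=
  induced K (vertexSet K \ U)

/-- The degree of a vertex: the number of vertices of its link. -/
def vertDegree (K : Finset (Finset V)) (v : V) : ℕ := (vertexSet (link K {v})).card

/-- `farApart G x y` : the distance from `x` to `y` in the graph `G` is at least `3`
(where unreachable counts as infinite distance). -/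
def farApart (G : SimpleGraph V) (x y : V) : Prop :=
  x ≠ y ∧ ¬ G.Adj x y ∧ ∀ z : V, ¬ (G.Adj x z ∧ G.Adj z y)

/-- `Admissible X σ₁ σ₂ ψ` : `σ₁, σ₂` are disjoint facets of `X` and `ψ` restricts to a
bijection from `σ₁` onto `σ₂` moving every `x ∈ σ₁` to distance at least 3 from itself. -/
def Admissible (X : Finset (Finset V)) (σ₁ σ₂ : Finset V) (ψ : V → V) : Prop :=
  IsFacet X σ₁ ∧ IsFacet X σ₂ ∧ Disjoint σ₁ σ₂ ∧ Set.BijOn ψ ↑σ₁ ↑σ₂ ∧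
    ∀ x ∈ σ₁, farApart (edgeGraph X) x (ψ x)

/-- Elementary handle addition `X^ψ`: remove the two facets `σ₁, σ₂` and identify each
`x ∈ σ₁` with `ψ x ∈ σ₂`. -/
def handleAdd (X : Finset (Finset V)) (σ₁ σ₂ : Finset V) (ψ : V → V) :
    Finset (Finset V) :=
  ((X.erase σ₁).erase σ₂).image fun s => s.image fun x => if x ∈ σ₁ then ψ x else x

/-- Isomorphism of simplicial complexes: an injection on vertices carrying the faces of one
complex exactly onto the faces of the other. -/
def CplxIso {W : Type} [DecidableEq W] (K : Finset (Finset V)) (L : Finset (Finset W)) :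
    Prop :=
  ∃ f : V → W, Set.InjOn f ↑(vertexSet K) ∧ L = K.image fun s => s.image f

/-- The connected component of the complex `K` containing the vertex `v` (as a subcomplex). -/
def componentOf (K : Finset (Finset V)) (v : V) : Finset (Finset V) :=
  K.filter fun s => ∀ x ∈ s, (edgeGraph K).Reachable v x

/-- The edges of `M` having exactly one end in `A`. -/
def crossEdges (M : Finset (Finset V)) (A : Finset V) : Finset (Finset V) :=
  M.filter fun e => e.card = 2 ∧ (e ∩ A).card = 1

/-- The graph whose vertices are the edges of `M` with exactly one end in `A`, two of them
being adjacent when the union of the corresponding edges is a 2-dimensional face of `M`. -/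
def crossGraph (M : Finset (Finset V)) (A : Finset V) : SimpleGraph (Finset V) where
  Adj e f := e ≠ f ∧ e ∈ crossEdges M A ∧ f ∈ crossEdges M A ∧
    e ∪ f ∈ M ∧ (e ∪ f).card = 3
  symm := by
    constructor
    intro e f h
    obtain ⟨h1, h2, h3, h4, h5⟩ := h
    exact ⟨h1.symm, h3, h2, by rwa [Finset.union_comm], by rwa [Finset.union_comm]⟩
  loopless := by
    constructor
    intro e h
    exact h.1 rfl

/-- The class `𝒦(d)`: normal `d`-pseudomanifolds all of whose vertex links are stacked
`(d-1)`-spheres. -/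
def InClassK (K : Finset (Finset V)) (d : ℕ) : Prop :=
  IsNormalPM K d ∧ ∀ v ∈ vertexSet K, IsStackedSphere (link K {v}) (d - 1)

/-- The total number of partitions of `n`. -/
def numPartitions (n : ℕ) : ℕ := Fintype.card (Nat.Partition n)

/-- The number of even partitions of `n` (those with an even number of even parts). -/
def numEvenPartitions (n : ℕ) : ℕ :=
  Fintype.card {p : Nat.Partition n // Even (Multiset.card (p.parts.filter fun i => Even i))}

/-- The number of odd partitions of `n` (those with an odd number of even parts). -/
def numOddPartitions (n : ℕ) : ℕ :=
  Fintype.card {p : Nat.Partition n // Odd (Multiset.card (p.parts.filter fun i => Even i))}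

/-- The facets of `N^{d+1}_{m+d+1}` : the sets of `d+2` consecutive integers inside
`{1, …, m+d+1}`. -/
def NFacets (d m : ℕ) : Finset (Finset ℕ) :=
  (Finset.Icc 1 m).image fun k => Finset.Icc k (k + d + 1)

/-- The complex `N^{d+1}_{m+d+1}` on vertex set `{1, …, m+d+1}` whose facets are the sets
of `d+2` consecutive integers. -/
def Ncomplex (d m : ℕ) : Finset (Finset ℕ) :=
  ((NFacets d m).biUnion Finset.powerset).filter fun s => s.Nonempty

/-- The facets of the boundary complex `∂N^{d+1}_{m+d+1}` : the `(d+1)`-element subsets of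
`{1, …, m+d+1}` contained in exactly one facet of `N^{d+1}_{m+d+1}`. -/
def boundaryNFacets (d m : ℕ) : Finset (Finset ℕ) :=
  (Finset.Icc 1 (m + d + 1)).powerset.filter fun s =>
    s.card = d + 1 ∧ ((Finset.Icc 1 m).filter fun k => s ⊆ Finset.Icc k (k + d + 1)).card = 1

/-- The boundary complex `∂N^{d+1}_{m+d+1}`. -/
def boundaryN (d m : ℕ) : Finset (Finset ℕ) :=
  ((boundaryNFacets d m).biUnion Finset.powerset).filter fun s => s.Nonempty


section Aux
set_option linter.unusedSectionVars false

variable {K : Finset (Finset V)} {e : ℕ}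

lemma mem_vertexSet_iff {v : V} : v ∈ vertexSet K ↔ ∃ s ∈ K, v ∈ s := by
  simp [vertexSet, Finset.mem_sup]

lemma mem_vertexSet_of {s : Finset V} (hs : s ∈ K) {v : V} (hv : v ∈ s) :
    v ∈ vertexSet K := mem_vertexSet_iff.2 ⟨s, hs, hv⟩

lemma pm_sub_mem (hK : IsComplex K) {s t : Finset V} (hs : s ∈ K) (hts : t ⊆ s)
    (hne : t.Nonempty) : t ∈ K := hK.2 s hs t hts hne

lemma singleton_mem (hK : IsComplex K) {v : V} (hv : v ∈ vertexSet K) : ({v} : Finset V) ∈ K := by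
  obtain ⟨s, hs, hvs⟩ := mem_vertexSet_iff.1 hv
  exact pm_sub_mem hK hs (by simpa [Finset.singleton_subset_iff]) ⟨v, by simp⟩

lemma exists_facet {s : Finset V} (hs : s ∈ K) : ∃ t, s ⊆ t ∧ IsFacet K t := by
  obtain ⟨t, ht, hmax⟩ := (K.filter fun t => s ⊆ t).exists_max_image Finset.card
    ⟨s, by simp [hs]⟩
  rw [Finset.mem_filter] at ht
  refine ⟨t, ht.2, ht.1, fun u hu htu => ?_⟩
  exact Finset.eq_of_subset_of_card_le htu
    (hmax u (Finset.mem_filter.2 ⟨hu, ht.2.trans htu⟩))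

lemma card_le_pure (hP : IsPure K e) {s : Finset V} (hs : s ∈ K) : s.card ≤ e + 1 := by
  obtain ⟨t, hst, htf⟩ := exists_facet hs
  calc s.card ≤ t.card := Finset.card_le_card hst
    _ = e + 1 := hP.2 t htf

lemma facet_of_card (hP : IsPure K e) {s : Finset V} (hs : s ∈ K) (hc : s.card = e + 1) :
    IsFacet K s := by
  refine ⟨hs, fun t ht hst => Finset.eq_of_subset_of_card_le hst ?_⟩
  rw [hc]; exact card_le_pure hP ht

lemma two_sides (hW : IsWeakPM K e) {s : Finset V} (hs : s ∈ K) (hc : s.card = e) :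
    ∃ x y, x ≠ y ∧ x ∉ s ∧ y ∉ s ∧ IsFacet K (insert x s) ∧ IsFacet K (insert y s) ∧
      (∀ t, IsFacet K t → s ⊆ t → t = insert x s ∨ t = insert y s) ∧
      ∀ t ∈ K, s ⊆ t → t = s ∨ t = insert x s ∨ t = insert y s := by
  obtain ⟨F₁, F₂, hne, hF⟩ := Finset.card_eq_two.1 (hW.2.2 s hs hc)
  have h₁ : IsFacet K F₁ ∧ s ⊆ F₁ := by
    have : F₁ ∈ K.filter fun t => IsFacet K t ∧ s ⊆ t := by rw [hF]; simp
    exact (Finset.mem_filter.1 this).2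
  have h₂ : IsFacet K F₂ ∧ s ⊆ F₂ := by
    have : F₂ ∈ K.filter fun t => IsFacet K t ∧ s ⊆ t := by rw [hF]; simp
    exact (Finset.mem_filter.1 this).2
  have hP := hW.2.1
  have hcard : ∀ F : Finset V, IsFacet K F → s ⊆ F → ∃ x, x ∉ s ∧ F = insert x s := by
    intro F hFf hsF
    have hdc : (F \ s).card = 1 := by
      rw [Finset.card_sdiff_of_subset hsF, hP.2 F hFf, hc]; omega
    obtain ⟨x, hx⟩ := Finset.card_eq_one.1 hdc
    have hxm : x ∈ F \ s := by rw [hx]; simp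
    refine ⟨x, (Finset.mem_sdiff.1 hxm).2, ?_⟩
    apply Finset.Subset.antisymm
    · intro z hz
      by_cases hzs : z ∈ s
      · exact Finset.mem_insert_of_mem hzs
      · have : z ∈ F \ s := Finset.mem_sdiff.2 ⟨hz, hzs⟩
        rw [hx] at this; simp at this; simp [this]
    · intro z hz
      rcases Finset.mem_insert.1 hz with h | h
      · subst h; exact (Finset.mem_sdiff.1 hxm).1
      · exact hsF h
  obtain ⟨x, hxs, hx⟩ := hcard F₁ h₁.1 h₁.2
  obtain ⟨y, hys, hy⟩ := hcard F₂ h₂.1 h₂.2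
  have hxy : x ≠ y := by
    intro h; subst h; rw [hx, hy] at hne; exact hne rfl
  have huniq : ∀ t, IsFacet K t → s ⊆ t → t = insert x s ∨ t = insert y s := by
    intro t htf hst
    have : t ∈ K.filter fun t => IsFacet K t ∧ s ⊆ t := Finset.mem_filter.2 ⟨htf.1, htf, hst⟩
    rw [hF] at this; simp at this
    rcases this with h | h
    · left; rw [← hx, h]
    · right; rw [← hy, h]
  refine ⟨x, y, hxy, hxs, hys, hx ▸ h₁.1, hy ▸ h₂.1, huniq, ?_⟩
  intro t ht hst
  obtain ⟨u, htu, huf⟩ := exists_facet ht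
  rcases huniq u huf (hst.trans htu) with h | h
  · subst h
    by_cases hxt : x ∈ t
    · right; left
      apply Finset.Subset.antisymm htu
      intro z hz
      rcases Finset.mem_insert.1 hz with h | h
      · subst h; exact hxt
      · exact hst h
    · left
      apply Finset.Subset.antisymm _ hst
      intro z hz
      rcases Finset.mem_insert.1 (htu hz) with h | h
      · subst h; exact absurd hz hxt
      · exact h
  · subst h
    by_cases hyt : y ∈ t
    · right; right
      apply Finset.Subset.antisymm htu
      intro z hz
      rcases Finset.mem_insert.1 hz with h | h
      · subst h; exact hyt
      · exact hst h
    · left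
      apply Finset.Subset.antisymm _ hst
      intro z hz
      rcases Finset.mem_insert.1 (htu hz) with h | h
      · subst h; exact absurd hz hyt
      · exact h


lemma mem_link_iff {α β : Finset V} : β ∈ link K α ↔ β ∈ K ∧ Disjoint α β ∧ α ∪ β ∈ K := by
  simp [link, and_assoc]

lemma link_isComplex (hK : IsComplex K) (α : Finset V) : IsComplex (link K α) := by
  constructor
  · intro s hs; exact hK.1 s (mem_link_iff.1 hs).1
  · intro s hs t hts htne
    obtain ⟨hsK, hd, hu⟩ := mem_link_iff.1 hs
    refine mem_link_iff.2 ⟨hK.2 s hsK t hts htne, hd.mono_right hts, ?_⟩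
    refine hK.2 _ hu _ (Finset.union_subset_union_right hts) ?_
    exact htne.mono Finset.subset_union_right

lemma mem_vertexSet_link_iff (hK : IsComplex K) {α : Finset V} {v : V} :
    v ∈ vertexSet (link K α) ↔ ({v} : Finset V) ∈ link K α := by
  constructor
  · intro hv
    obtain ⟨s, hs, hvs⟩ := mem_vertexSet_iff.1 hv
    exact pm_sub_mem (link_isComplex hK α) hs (by simpa [Finset.singleton_subset_iff])
      ⟨v, by simp⟩
  · intro h; exact mem_vertexSet_of h (by simp)

lemma link_link (hK : IsComplex K) {v : V} {s : Finset V} (hv : v ∉ s) :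
    link (link K {v}) s = link K (insert v s) := by
  ext β
  rw [mem_link_iff, mem_link_iff, mem_link_iff, mem_link_iff]
  constructor
  · rintro ⟨⟨hβ, hdv, -⟩, hds, -, -, hu⟩
    refine ⟨hβ, ?_, ?_⟩
    · rw [Finset.insert_eq, Finset.disjoint_union_left]; exact ⟨hdv, hds⟩
    · rw [Finset.insert_eq, Finset.union_assoc]; exact hu
  · rintro ⟨hβ, hd, hu⟩
    rw [Finset.insert_eq, Finset.disjoint_union_left] at hd
    rw [Finset.insert_eq, Finset.union_assoc] at hu
    have hβne : β.Nonempty := hK.1 β hβ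
    have h1 : ({v} : Finset V) ∪ β ∈ K :=
      pm_sub_mem hK hu (by intro z hz; simp at hz ⊢; tauto) (hβne.mono (by simp))
    have h2 : s ∪ β ∈ K :=
      pm_sub_mem hK hu (by intro z hz; simp at hz ⊢; tauto) (hβne.mono (by simp))
    have h3 : Disjoint ({v} : Finset V) (s ∪ β) := by
      rw [Finset.disjoint_union_right]
      exact ⟨by simpa using hv, hd.1⟩
    exact ⟨⟨hβ, hd.1, h1⟩, hd.2, h2, h3, hu⟩

lemma link_card_le (hK : IsComplex K) (hP : IsPure K e) {v : V} {β : Finset V}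
    (hβ : β ∈ link K {v}) : β.card ≤ e := by
  obtain ⟨hβK, hd, hu⟩ := mem_link_iff.1 hβ
  have := card_le_pure hP hu
  rw [Finset.card_union_of_disjoint hd, Finset.card_singleton] at this
  omega

lemma link_vertex_facet (hK : IsComplex K) (hP : IsPure K e) (he : 1 ≤ e) {v : V}
    {β : Finset V} (hβ : β ∈ link K {v}) :
    ∃ γ, β ⊆ γ ∧ γ ∈ link K {v} ∧ γ.card = e ∧ IsFacet K (insert v γ) := by
  obtain ⟨hβK, hd, hu⟩ := mem_link_iff.1 hβ
  obtain ⟨F, hF, hFf⟩ := exists_facet hu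
  have hvF : v ∈ F := hF (by simp)
  have hcF : F.card = e + 1 := hP.2 F hFf
  have hγc : (F.erase v).card = e := by rw [Finset.card_erase_of_mem hvF, hcF]; omega
  have hvβ : v ∉ β := by simpa [Finset.disjoint_singleton_left] using hd
  have hins : insert v (F.erase v) = F := Finset.insert_erase hvF
  have hγK : F.erase v ∈ K := by
    refine pm_sub_mem hK hFf.1 (Finset.erase_subset _ _) ?_
    rw [← Finset.card_pos, hγc]; omega
  have hγl : F.erase v ∈ link K {v} := by
    refine mem_link_iff.2 ⟨hγK, by simp [Finset.disjoint_singleton_left], ?_⟩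
    rw [← Finset.insert_eq, hins]; exact hFf.1
  refine ⟨F.erase v, ?_, hγl, hγc, by rw [hins]; exact hFf⟩
  intro z hz
  exact Finset.mem_erase.2 ⟨fun h => hvβ (h ▸ hz), hF (by simp [hz])⟩

lemma link_facet_iff (hK : IsComplex K) (hP : IsPure K e) (he : 1 ≤ e) {v : V}
    {β : Finset V} : IsFacet (link K {v}) β ↔ β ∈ link K {v} ∧ β.card = e := by
  constructor
  · intro hf
    obtain ⟨γ, hβγ, hγl, hγc, -⟩ := link_vertex_facet hK hP he hf.1
    have := hf.2 γ hγl hβγ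
    exact ⟨hf.1, this ▸ hγc⟩
  · rintro ⟨hβ, hc⟩
    refine ⟨hβ, fun t ht hβt => Finset.eq_of_subset_of_card_le hβt ?_⟩
    rw [hc]; exact link_card_le hK hP ht

lemma erase_facet_link (hK : IsComplex K) (hP : IsPure K e) (he : 1 ≤ e) {v : V}
    {F : Finset V} (hF : IsFacet K F) (hv : v ∈ F) :
    IsFacet (link K {v}) (F.erase v) := by
  have hcF : F.card = e + 1 := hP.2 F hF
  refine (link_facet_iff hK hP he).2 ⟨?_, by rw [Finset.card_erase_of_mem hv, hcF]; omega⟩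
  refine mem_link_iff.2 ⟨?_, by simp [Finset.disjoint_singleton_left], ?_⟩
  · refine pm_sub_mem hK hF.1 (Finset.erase_subset _ _) ?_
    rw [← Finset.card_pos, Finset.card_erase_of_mem hv, hcF]; omega
  · rw [← Finset.insert_eq, Finset.insert_erase hv]; exact hF.1

lemma link_nonempty (hK : IsComplex K) (hP : IsPure K e) (he : 1 ≤ e) {v : V}
    (hv : v ∈ vertexSet K) : (link K {v}).Nonempty := by
  have hvK : ({v} : Finset V) ∈ K := singleton_mem hK hv
  obtain ⟨F, hF, hFf⟩ := exists_facet hvK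
  have hvF : v ∈ F := hF (by simp)
  refine ⟨F.erase v, ((link_facet_iff hK hP he).1 (erase_facet_link hK hP he hFf hvF)).1⟩

lemma link_isPure (hK : IsComplex K) (hP : IsPure K e) (he : 1 ≤ e) {v : V}
    (hv : v ∈ vertexSet K) : IsPure (link K {v}) (e - 1) := by
  refine ⟨link_nonempty hK hP he hv, fun s hs => ?_⟩
  have := ((link_facet_iff hK hP he).1 hs).2
  omega

lemma link_isWeakPM (hK : IsComplex K) (hW : IsWeakPM K e) (he : 2 ≤ e) {v : V}
    (hv : v ∈ vertexSet K) : IsWeakPM (link K {v}) (e - 1) := by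
  have hP := hW.2.1
  have he1 : 1 ≤ e := by omega
  refine ⟨link_isComplex hK _, link_isPure hK hP he1 hv, fun s hs hsc => ?_⟩
  obtain ⟨hsK, hsd, hsu⟩ := mem_link_iff.1 hs
  have hvs : v ∉ s := by simpa [Finset.disjoint_singleton_left] using hsd
  have hins : insert v s ∈ K := by rw [Finset.insert_eq]; exact hsu
  have hinsc : (insert v s).card = e := by
    rw [Finset.card_insert_of_notMem hvs, hsc]; omega
  have key := hW.2.2 _ hins hinsc
  rw [← key]
  refine Finset.card_bij' (fun t _ => insert v t) (fun F _ => F.erase v) ?_ ?_ ?_ ?_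
  · intro t ht
    rw [Finset.mem_filter] at ht
    obtain ⟨htl, htf, hst⟩ := ht
    have htc : t.card = e := ((link_facet_iff hK hP he1).1 htf).2
    obtain ⟨htK, htd, htu⟩ := mem_link_iff.1 htl
    have hvt : v ∉ t := by simpa [Finset.disjoint_singleton_left] using htd
    have h1 : insert v t ∈ K := by rw [Finset.insert_eq]; exact htu
    have h2 : (insert v t).card = e + 1 := by
      rw [Finset.card_insert_of_notMem hvt, htc]
    refine Finset.mem_filter.2 ⟨h1, facet_of_card hP h1 h2, ?_⟩
    exact Finset.insert_subset_insert v hst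
  · intro F hF
    rw [Finset.mem_filter] at hF
    obtain ⟨hFK, hFf, hsF⟩ := hF
    have hvF : v ∈ F := hsF (by simp)
    have hefl := erase_facet_link hK hP he1 hFf hvF
    refine Finset.mem_filter.2 ⟨hefl.1, hefl, ?_⟩
    intro z hz
    exact Finset.mem_erase.2 ⟨fun h => hvs (h ▸ hz), hsF (Finset.mem_insert_of_mem hz)⟩
  · intro t ht
    rw [Finset.mem_filter] at ht
    obtain ⟨htl, -, -⟩ := ht
    have hvt : v ∉ t := by
      simpa [Finset.disjoint_singleton_left] using (mem_link_iff.1 htl).2.1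
    exact Finset.erase_insert hvt
  · intro F hF
    rw [Finset.mem_filter] at hF
    exact Finset.insert_erase (hF.2.2 (by simp))

lemma link_isNormalPM (hK : IsComplex K) (hn : IsNormalPM K e) (he : 2 ≤ e) {v : V}
    (hv : v ∈ vertexSet K) : IsNormalPM (link K {v}) (e - 1) := by
  have hvK : ({v} : Finset V) ∈ K := singleton_mem hK hv
  refine ⟨link_isWeakPM hK hn.1 he hv, ?_, ?_⟩
  · exact hn.2.2 {v} hvK (by simp; omega)
  · intro s hs hsc
    obtain ⟨hsK, hsd, hsu⟩ := mem_link_iff.1 hs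
    have hvs : v ∉ s := by simpa [Finset.disjoint_singleton_left] using hsd
    rw [link_link hK hvs]
    refine hn.2.2 _ (by rw [Finset.insert_eq]; exact hsu) ?_
    rw [Finset.card_insert_of_notMem hvs]
    omega


def DualRel (K : Finset (Finset V)) (e : ℕ) (p q : Finset V) : Prop :=
  IsFacet K p ∧ IsFacet K q ∧ ∃ τ ∈ K, τ.card = e ∧ τ ⊆ p ∧ τ ⊆ q

lemma walk_chain {e : ℕ} (hK : IsComplex K)
    (hsv : ∀ (v : V) (F F' : Finset V), IsFacet K F → IsFacet K F' → v ∈ F → v ∈ F' →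
      Relation.ReflTransGen (DualRel K e) F F') :
    ∀ {u v : V} (_ : (edgeGraph K).Walk u v) (F F' : Finset V), IsFacet K F →
      IsFacet K F' → u ∈ F → v ∈ F' → Relation.ReflTransGen (DualRel K e) F F' := by
  intro u v w
  induction w with
  | nil => intro F F' hF hF' hu hv; exact hsv _ F F' hF hF' hu hv
  | @cons u u' v h p ih =>
    intro F F' hF hF' hu hv
    obtain ⟨G, hG, hGf⟩ := exists_facet h.2
    exact (hsv u F G hF hGf hu (hG (by simp))).trans
      (ih G F' hGf hF' (hG (by simp)) hv)

lemma strong_conn : ∀ e, 1 ≤ e → ∀ (K : Finset (Finset V)), IsNormalPM K e →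
    ∀ F F', IsFacet K F → IsFacet K F' → Relation.ReflTransGen (DualRel K e) F F' := by
  intro e he
  induction e, he using Nat.le_induction with
  | base =>
    intro K hn F F' hF hF'
    have hK := hn.1.1
    have hsv : ∀ (v : V) (F F' : Finset V), IsFacet K F → IsFacet K F' → v ∈ F → v ∈ F' →
        Relation.ReflTransGen (DualRel K 1) F F' := by
      intro v F F' hF hF' hvF hvF'
      refine Relation.ReflTransGen.single ⟨hF, hF', {v}, ?_, by simp, by simpa, by simpa⟩
      exact pm_sub_mem hK hF.1 (by simpa [Finset.singleton_subset_iff]) ⟨v, by simp⟩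
    obtain ⟨u, hu⟩ := hK.1 F hF.1
    obtain ⟨u', hu'⟩ := hK.1 F' hF'.1
    have hreach := hn.2.1.2 u (mem_vertexSet_of hF.1 hu) u' (mem_vertexSet_of hF'.1 hu')
    exact hreach.elim fun w => walk_chain hK hsv w F F' hF hF' hu hu'
  | succ e he ih =>
    intro K hn F F' hF hF'
    have hK := hn.1.1
    have hP := hn.1.2.1
    have he1 : 1 ≤ e + 1 := by omega
    have hsv : ∀ (v : V) (F F' : Finset V), IsFacet K F → IsFacet K F' → v ∈ F → v ∈ F' →
        Relation.ReflTransGen (DualRel K (e+1)) F F' := by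
      intro v F F' hF hF' hvF hvF'
      have hv : v ∈ vertexSet K := mem_vertexSet_of hF.1 hvF
      have hL : IsNormalPM (link K {v}) e := by
        simpa using link_isNormalPM hK hn (by omega) hv
      have hchain := ih (link K {v}) hL (F.erase v) (F'.erase v)
        (erase_facet_link hK hP he1 hF hvF) (erase_facet_link hK hP he1 hF' hvF')
      have hstep : ∀ p q : Finset V, DualRel (link K {v}) e p q →
          DualRel K (e+1) (insert v p) (insert v q) := by
        rintro p q ⟨hp, hq, τ, hτ, hτc, hτp, hτq⟩
        have hmk : ∀ t : Finset V, IsFacet (link K {v}) t → IsFacet K (insert v t) := by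
          intro t ht
          obtain ⟨htl, htc⟩ := (link_facet_iff hK hP he1).1 ht
          obtain ⟨htK, htd, htu⟩ := mem_link_iff.1 htl
          have hvt : v ∉ t := by simpa [Finset.disjoint_singleton_left] using htd
          refine facet_of_card hP (by rw [Finset.insert_eq]; exact htu) ?_
          rw [Finset.card_insert_of_notMem hvt, htc]
        obtain ⟨hτK, hτd, hτu⟩ := mem_link_iff.1 hτ
        have hvτ : v ∉ τ := by simpa [Finset.disjoint_singleton_left] using hτd
        refine ⟨hmk p hp, hmk q hq, insert v τ, by rw [Finset.insert_eq]; exact hτu, ?_,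
          Finset.insert_subset_insert v hτp, Finset.insert_subset_insert v hτq⟩
        rw [Finset.card_insert_of_notMem hvτ, hτc]
      have hlift := Relation.ReflTransGen.lift (r := DualRel (link K {v}) e)
        (p := DualRel K (e+1)) (fun s => insert v s) hstep _ _ hchain
      simp only [Function.onFun, Finset.insert_erase hvF, Finset.insert_erase hvF'] at hlift
      exact hlift
    obtain ⟨u, hu⟩ := hK.1 F hF.1
    obtain ⟨u', hu'⟩ := hK.1 F' hF'.1
    have hreach := hn.2.1.2 u (mem_vertexSet_of hF.1 hu) u' (mem_vertexSet_of hF'.1 hu')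
    exact hreach.elim fun w => walk_chain hK hsv w F F' hF hF' hu hu'


lemma even_card_symm_pairs : ∀ (P : Finset (V × V)), (∀ p ∈ P, (p.2, p.1) ∈ P) →
    (∀ p ∈ P, p.1 ≠ p.2) → Even P.card := by
  intro P
  induction P using Finset.strongInduction with
  | _ P ih =>
    intro hsymm hirr
    rcases P.eq_empty_or_nonempty with h | ⟨p, hp⟩
    · simp [h]
    · have hps : (p.2, p.1) ∈ P := hsymm p hp
      have hpp : p ≠ (p.2, p.1) := by
        intro h
        exact hirr p hp (by rw [Prod.ext_iff] at h; exact h.1)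
      have hsub : ({p, (p.2, p.1)} : Finset (V × V)) ⊆ P := by
        intro q hq; rcases Finset.mem_insert.1 hq with h | h
        · exact h ▸ hp
        · rw [Finset.mem_singleton.1 h]; exact hps
      set Q := P \ {p, (p.2, p.1)} with hQ
      have hQss : Q ⊂ P := Finset.sdiff_ssubset hsub (by simp)
      have hQsymm : ∀ q ∈ Q, (q.2, q.1) ∈ Q := by
        intro q hq
        rw [hQ, Finset.mem_sdiff] at hq ⊢
        refine ⟨hsymm q hq.1, fun h => hq.2 ?_⟩
        simp only [Finset.mem_insert, Finset.mem_singleton] at h ⊢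
        rcases h with h | h
        · right; rw [Prod.ext_iff] at h ⊢; exact ⟨h.2, h.1⟩
        · left; rw [Prod.ext_iff] at h ⊢; exact ⟨h.2, h.1⟩
      have hQirr : ∀ q ∈ Q, q.1 ≠ q.2 := fun q hq => hirr q (Finset.mem_sdiff.1 hq).1
      have hcard : P.card = Q.card + 2 := by
        rw [hQ, Finset.card_sdiff_of_subset hsub, Finset.card_insert_of_notMem (by simpa using hpp),
          Finset.card_singleton]
        have h2 : 2 ≤ P.card := by
          calc 2 = ({p, (p.2, p.1)} : Finset (V × V)).card := by
                rw [Finset.card_insert_of_notMem (by simpa using hpp)]; simp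
            _ ≤ P.card := Finset.card_le_card hsub
        omega
      rw [hcard]
      have := ih Q hQss hQsymm hQirr
      rcases this with ⟨k, hk⟩
      exact ⟨k + 1, by omega⟩

lemma cycle_cross (S : Finset V) (G : SimpleGraph V)
    (hsub : ∀ p q : V, G.Adj p q → p ∈ S ∧ q ∈ S)
    (hdeg : ∀ p ∈ S, (S.filter (G.Adj p)).card = 2)
    {a a' : V} (ha : a ∈ S) (ha' : a' ∈ S) (hne : a ≠ a') (hnadj : ¬ G.Adj a a')
    (hconn : ∀ p ∈ S, G.Reachable p a)
    {x : V} (hx : G.Adj a' x) :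
    ∃ y, G.Adj a y ∧ Relation.ReflTransGen
      (fun p q => G.Adj p q ∧ p ≠ a ∧ p ≠ a' ∧ q ≠ a ∧ q ≠ a') x y := by
  classical
  set R := fun p q => G.Adj p q ∧ p ≠ a ∧ p ≠ a' ∧ q ≠ a ∧ q ≠ a' with hR
  set C := S.filter (fun z => Relation.ReflTransGen R x z) with hC
  have hxS : x ∈ S := (hsub _ _ hx).2
  have hxa : x ≠ a := by
    intro h; subst h; exact hnadj hx.symm
  have hxa' : x ≠ a' := fun h => G.loopless.irrefl a' (h ▸ hx)
  have hxC : x ∈ C := Finset.mem_filter.2 ⟨hxS, Relation.ReflTransGen.refl⟩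
  have hCprop : ∀ z ∈ C, z ≠ a ∧ z ≠ a' := by
    intro z hz
    have hrtg := (Finset.mem_filter.1 hz).2
    rcases Relation.ReflTransGen.cases_tail hrtg with h | ⟨w, -, hw⟩
    · subst h; exact ⟨hxa, hxa'⟩
    · exact ⟨hw.2.2.2.1, hw.2.2.2.2⟩
  by_cases hadjC : ∃ z ∈ C, G.Adj a z
  · obtain ⟨z, hzC, hz⟩ := hadjC
    exact ⟨z, hz, (Finset.mem_filter.1 hzC).2⟩
  · exfalso
    have haC : a ∉ C := fun h => (hCprop a h).1 rfl
    have ha'C : a' ∉ C := fun h => (hCprop a' h).2 rfl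
    have hCS : C ⊆ S := Finset.filter_subset _ _
    -- every neighbor of a point of C is in C or equals a'
    have hclose : ∀ u ∈ C, ∀ w, G.Adj u w → w ≠ a' → w ∈ C := by
      intro u hu w hadj hwa'
      have hwa : w ≠ a := by
        intro h; subst h; exact hadjC ⟨u, hu, hadj.symm⟩
      have hu2 := hCprop u hu
      refine Finset.mem_filter.2 ⟨(hsub _ _ hadj).2, ?_⟩
      exact ((Finset.mem_filter.1 hu).2).tail ⟨hadj, hu2.1, hu2.2, hwa, hwa'⟩
    -- parity: the set of C-vertices adjacent to a' has even cardinality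
    set P := (C ×ˢ C).filter (fun p => G.Adj p.1 p.2) with hP
    set Pall := (C ×ˢ S).filter (fun p => G.Adj p.1 p.2) with hPall
    have hPsub : P ⊆ Pall := by
      apply Finset.filter_subset_filter
      exact Finset.product_subset_product (le_refl _) hCS
    have hPeven : Even P.card := by
      apply even_card_symm_pairs
      · rintro ⟨u, w⟩ hp
        rw [hP, Finset.mem_filter, Finset.mem_product] at hp ⊢
        exact ⟨⟨hp.1.2, hp.1.1⟩, hp.2.symm⟩
      · rintro ⟨u, w⟩ hp
        rw [hP, Finset.mem_filter] at hp
        exact hp.2.ne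
    have hPallcard : Pall.card = 2 * C.card := by
      have : Pall = C.biUnion (fun u => (S.filter (G.Adj u)).image (fun w => (u, w))) := by
        ext ⟨u, w⟩
        rw [hPall, Finset.mem_filter, Finset.mem_product, Finset.mem_biUnion]
        constructor
        · rintro ⟨⟨h1, h2⟩, h3⟩
          exact ⟨u, h1, Finset.mem_image.2 ⟨w, Finset.mem_filter.2 ⟨h2, h3⟩, rfl⟩⟩
        · rintro ⟨u', hu', hw⟩
          obtain ⟨w', hw', heq⟩ := Finset.mem_image.1 hw
          rw [Prod.ext_iff] at heq
          obtain ⟨rfl, rfl⟩ := heq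
          have := Finset.mem_filter.1 hw'
          exact ⟨⟨hu', this.1⟩, this.2⟩
      rw [this, Finset.card_biUnion]
      · rw [Finset.sum_congr rfl (fun u hu => ?_), Finset.sum_const, smul_eq_mul, mul_comm]
        rw [Finset.card_image_of_injective _ (fun w w' h => (Prod.ext_iff.1 h).2),
          hdeg u (hCS hu)]
      · intro u hu u' hu' hne'
        simp only [Finset.disjoint_left]
        intro p hp hp'
        obtain ⟨w, -, rfl⟩ := Finset.mem_image.1 hp
        obtain ⟨w', -, heq⟩ := Finset.mem_image.1 hp'
        exact hne' (Prod.ext_iff.1 heq).1.symm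
    have hPoutcard : (Pall \ P).card + P.card = Pall.card :=
      Finset.card_sdiff_add_card_eq_card hPsub
    have hPouteven : Even (Pall \ P).card := by
      have h1 : Even Pall.card := by rw [hPallcard]; exact even_two_mul _
      rcases hPeven with ⟨k, hk⟩
      rcases h1 with ⟨m, hm⟩
      exact ⟨m - k, by omega⟩
    set Cadj := C.filter (fun u => G.Adj u a') with hCadj
    have hPout_eq : Pall \ P = Cadj.image (fun u => (u, a')) := by
      ext ⟨u, w⟩
      rw [Finset.mem_sdiff, hPall, hP, Finset.mem_filter, Finset.mem_filter,
        Finset.mem_product, Finset.mem_product, Finset.mem_image]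
      constructor
      · rintro ⟨⟨⟨h1, h2⟩, h3⟩, h4⟩
        have hwC : w ∉ C := fun hw => h4 ⟨⟨h1, hw⟩, h3⟩
        have hwa' : w = a' := by
          by_contra hne''
          exact hwC (hclose u h1 w h3 hne'')
        subst hwa'
        exact ⟨u, Finset.mem_filter.2 ⟨h1, h3⟩, rfl⟩
      · rintro ⟨u', hu', heq⟩
        obtain ⟨h5, h6⟩ := Prod.ext_iff.1 heq
        dsimp at h5 h6
        subst h5; subst h6
        have hu'2 := Finset.mem_filter.1 hu'
        exact ⟨⟨⟨hu'2.1, ha'⟩, hu'2.2⟩, fun hmem => ha'C hmem.1.2⟩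
    have hCadjcard : Cadj.card = (Pall \ P).card := by
      rw [hPout_eq, Finset.card_image_of_injective _ (fun u u' h => (Prod.ext_iff.1 h).1)]
    have hxCadj : x ∈ Cadj := Finset.mem_filter.2 ⟨hxC, hx.symm⟩
    have hNa' := hdeg a' ha'
    have hCadjsub : Cadj ⊆ S.filter (G.Adj a') := by
      intro u hu
      have := Finset.mem_filter.1 hu
      exact Finset.mem_filter.2 ⟨hCS this.1, this.2.symm⟩
    have h2le : 2 ≤ Cadj.card := by
      rcases hPouteven with ⟨k, hk⟩
      have hpos : 0 < Cadj.card := Finset.card_pos.2 ⟨x, hxCadj⟩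
      omega
    have hCadjeq : Cadj = S.filter (G.Adj a') :=
      Finset.eq_of_subset_of_card_le hCadjsub (by rw [hNa']; omega)
    have hclose' : ∀ u ∈ insert a' C, ∀ w, G.Adj u w → w ∈ insert a' C := by
      intro u hu w hadj
      rcases Finset.mem_insert.1 hu with rfl | huC
      · have hw : w ∈ Cadj := by
          rw [hCadjeq]; exact Finset.mem_filter.2 ⟨(hsub _ _ hadj).2, hadj⟩
        exact Finset.mem_insert_of_mem (Finset.mem_filter.1 hw).1
      · by_cases hwa' : w = a'
        · exact hwa' ▸ Finset.mem_insert_self _ _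
        · exact Finset.mem_insert_of_mem (hclose u huC w hadj hwa')
    have hwalk : ∀ {u v : V} (_ : G.Walk u v), u ∈ insert a' C → v ∈ insert a' C := by
      intro u v w
      induction w with
      | nil => exact id
      | cons h p ih => intro hu; exact ih (hclose' _ hu _ h)
    have hreach := hconn x hxS
    have haIn : a ∈ insert a' C := hreach.elim fun w => hwalk w (Finset.mem_insert_of_mem hxC)
    rcases Finset.mem_insert.1 haIn with h | h
    · exact hne h
    · exact haC h


lemma card_three {t p q : V} (h1 : t ≠ p) (h2 : t ≠ q) (h3 : p ≠ q) :
    ({t, p, q} : Finset V).card = 3 := by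
  rw [Finset.card_insert_of_notMem (by simp [h1, h2]), Finset.card_pair h3]

lemma eq_insert_of_card_succ {τ σ : Finset V} (hsub : τ ⊆ σ) (hc : σ.card = τ.card + 1) :
    ∃ a, a ∉ τ ∧ σ = insert a τ := by
  have hd : (σ \ τ).card = 1 := by rw [Finset.card_sdiff_of_subset hsub]; omega
  obtain ⟨a, ha⟩ := Finset.card_eq_one.1 hd
  have ham : a ∈ σ \ τ := by rw [ha]; simp
  refine ⟨a, (Finset.mem_sdiff.1 ham).2, ?_⟩
  apply Finset.Subset.antisymm
  · intro z hz
    by_cases hzτ : z ∈ τ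
    · exact Finset.mem_insert_of_mem hzτ
    · have : z ∈ σ \ τ := Finset.mem_sdiff.2 ⟨hz, hzτ⟩
      rw [ha] at this; simp at this; simp [this]
  · intro z hz
    rcases Finset.mem_insert.1 hz with h | h
    · subst h; exact (Finset.mem_sdiff.1 ham).1
    · exact hsub h

variable {M : Finset (Finset V)} {A : Finset V}

lemma pair_cross (hM : IsComplex M) {s : Finset V} (hs : s ∈ M) {t b : V}
    (hts : t ∈ s) (hbs : b ∈ s) (ht : t ∈ A) (hb : b ∉ A) : {t, b} ∈ crossEdges M A := by
  have htb : t ≠ b := fun h => hb (h ▸ ht)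
  have hmem : ({t, b} : Finset V) ∈ M := by
    refine pm_sub_mem hM hs ?_ ⟨t, by simp⟩
    intro z hz; rcases Finset.mem_insert.1 hz with h | h
    · exact h ▸ hts
    · rw [Finset.mem_singleton.1 h]; exact hbs
  have hint : ({t, b} : Finset V) ∩ A = {t} := by
    ext z
    simp only [Finset.mem_inter, Finset.mem_insert, Finset.mem_singleton]
    constructor
    · rintro ⟨h | h, hzA⟩
      · exact h
      · subst h; exact absurd hzA hb
    · rintro rfl; exact ⟨Or.inl rfl, ht⟩
  exact Finset.mem_filter.2 ⟨hmem, Finset.card_pair htb, by rw [hint]; simp⟩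

lemma cross_adj (hM : IsComplex M) {s : Finset V} (hs : s ∈ M)
    {e f : Finset V} (he : e ∈ crossEdges M A) (hf : f ∈ crossEdges M A)
    (hef : e ≠ f) (hsub : e ∪ f ⊆ s) (hcard : (e ∪ f).card = 3) :
    (crossGraph M A).Adj e f := by
  refine ⟨hef, he, hf, pm_sub_mem hM hs hsub ?_, hcard⟩
  rw [← Finset.card_pos, hcard]; omega

lemma union_pair_eq {t p q : V} : ({t, p} : Finset V) ∪ {t, q} = {t, p, q} := by
  ext z; simp [or_comm, or_assoc, or_left_comm]

lemma union_pair_eq' {a c x : V} : ({a, x} : Finset V) ∪ {c, x} = {a, c, x} := by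
  ext z; simp; tauto

lemma pair_ne_of {t p q : V} (htp : t ≠ p) (hpq : p ≠ q) : ({t, p} : Finset V) ≠ {t, q} := by
  intro h
  have : p ∈ ({t, q} : Finset V) := h ▸ (by simp : p ∈ ({t, p} : Finset V))
  simp at this
  rcases this with h' | h'
  · exact htp h'.symm
  · exact hpq h'

lemma pair_ne_of' {a c x : V} (hax : a ≠ x) (hac : a ≠ c) : ({a, x} : Finset V) ≠ {c, x} := by
  intro h
  have : a ∈ ({c, x} : Finset V) := h ▸ (by simp : a ∈ ({a, x} : Finset V))
  simp at this
  rcases this with h' | h'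
  · exact hac h'
  · exact hax h'

/-- Chain in the link of a face `γ ⊆ A`, staying outside `A`, lifts to the cross graph. -/
lemma cross_reach_chain (hM : IsComplex M) {γ : Finset V} (hγA : γ ⊆ A)
    {t : V} (ht : t ∈ γ) {x y : V}
    (hch : Relation.ReflTransGen
      (fun p q => (edgeGraph (link M γ)).Adj p q ∧ p ∉ A ∧ q ∉ A) x y) :
    (crossGraph M A).Reachable {t, x} {t, y} := by
  have htA : t ∈ A := hγA ht
  induction hch with
  | refl => exact SimpleGraph.Reachable.refl _
  | @tail b c hxb hbc ih =>
    refine ih.trans ?_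
    obtain ⟨⟨hbc_ne, hbcl⟩, hbA, hcA⟩ := hbc
    have hsM : γ ∪ {b, c} ∈ M := (mem_link_iff.1 hbcl).2.2
    have htb : t ≠ b := fun h => hbA (h ▸ htA)
    have htc : t ≠ c := fun h => hcA (h ▸ htA)
    have htm : t ∈ γ ∪ {b, c} := Finset.mem_union_left _ ht
    have hbm : b ∈ γ ∪ {b, c} := Finset.mem_union_right _ (by simp)
    have hcm : c ∈ γ ∪ {b, c} := Finset.mem_union_right _ (by simp)
    refine SimpleGraph.Adj.reachable ?_
    refine cross_adj hM hsM (pair_cross hM hsM htm hbm htA hbA)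
      (pair_cross hM hsM htm hcm htA hcA) (pair_ne_of htb hbc_ne) ?_ ?_
    · rw [union_pair_eq]
      intro z hz; simp at hz
      rcases hz with h | h | h
      · exact h ▸ htm
      · exact h ▸ hbm
      · exact h ▸ hcm
    · rw [union_pair_eq]; exact card_three htb htc hbc_ne

lemma exists_first_entry (G : SimpleGraph V) (PP : V → Prop) :
    ∀ {u v : V} (_ : G.Walk u v), ¬ PP u → PP v →
      ∃ x c, ¬ PP x ∧ PP c ∧ G.Adj x c ∧
        Relation.ReflTransGen (fun p q => G.Adj p q ∧ ¬ PP p ∧ ¬ PP q) u x := by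
  intro u v w
  induction w with
  | nil => intro hu hv; exact absurd hv hu
  | @cons u u' v h p ih =>
    intro hu hv
    by_cases hu' : PP u'
    · exact ⟨u, u', hu, hu', h, Relation.ReflTransGen.refl⟩
    · obtain ⟨x, c, h1, h2, h3, h4⟩ := ih hu' hv
      exact ⟨x, c, h1, h2, h3, Relation.ReflTransGen.head ⟨h, hu, hu'⟩ h4⟩


lemma reach_side {d : ℕ} (hd : 2 ≤ d) (hM : IsNormalPM M d)
    (hN : IsNormalPM (induced M A) (d - 1)) :
    ∀ n (F : Finset V) (a b : V), F ∈ M → a ∈ F → a ∈ A → b ∈ F → b ∉ A →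
      d ≤ (F ∩ A).card + n →
      ∃ (σ : Finset V) (x a₀ : V), σ ∈ M ∧ σ ⊆ A ∧ σ.card = d ∧ a₀ ∈ σ ∧ x ∉ A ∧ x ∉ σ ∧
        insert x σ ∈ M ∧ (crossGraph M A).Reachable {a, b} {a₀, x} := by
  have hMc := hM.1.1
  have hNP := hN.1.2.1
  have hfull : ∀ (F : Finset V) (a b : V), F ∈ M → a ∈ F → a ∈ A → b ∈ F → b ∉ A →
      (F ∩ A).card = d →
      ∃ (σ : Finset V) (x a₀ : V), σ ∈ M ∧ σ ⊆ A ∧ σ.card = d ∧ a₀ ∈ σ ∧ x ∉ A ∧ x ∉ σ ∧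
        insert x σ ∈ M ∧ (crossGraph M A).Reachable {a, b} {a₀, x} := by
    intro F a b hF haF haA hbF hbA hcd
    have haFA : a ∈ F ∩ A := Finset.mem_inter.2 ⟨haF, haA⟩
    refine ⟨F ∩ A, b, a, ?_, Finset.inter_subset_right, hcd, haFA, hbA,
      fun h => hbA (Finset.mem_inter.1 h).2, ?_, SimpleGraph.Reachable.refl _⟩
    · exact pm_sub_mem hMc hF Finset.inter_subset_left ⟨a, haFA⟩
    · exact pm_sub_mem hMc hF
        (Finset.insert_subset hbF Finset.inter_subset_left) ⟨b, by simp⟩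
  have hγNmem : ∀ (F : Finset V) (a : V), F ∈ M → a ∈ F → a ∈ A → F ∩ A ∈ induced M A := by
    intro F a hF haF haA
    exact Finset.mem_filter.2
      ⟨pm_sub_mem hMc hF Finset.inter_subset_left ⟨a, Finset.mem_inter.2 ⟨haF, haA⟩⟩,
       Finset.inter_subset_right⟩
  intro n
  induction n with
  | zero =>
    intro F a b hF haF haA hbF hbA hle
    have hcle : (F ∩ A).card ≤ d := by
      have := card_le_pure hNP (hγNmem F a hF haF haA); omega
    exact hfull F a b hF haF haA hbF hbA (by omega)
  | succ n ih =>
    intro F a b hF haF haA hbF hbA hle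
    have hγN := hγNmem F a hF haF haA
    have hcle : (F ∩ A).card ≤ d := by have := card_le_pure hNP hγN; omega
    by_cases hcd : (F ∩ A).card = d
    · exact hfull F a b hF haF haA hbF hbA hcd
    · set γ := F ∩ A with hγdef
      have hγM : γ ∈ M := (Finset.mem_filter.1 hγN).1
      have hγA : γ ⊆ A := Finset.inter_subset_right
      have hγF : γ ⊆ F := Finset.inter_subset_left
      obtain ⟨σ, hγσ, hσf⟩ := exists_facet hγN
      have hσc : σ.card = d := by have := hNP.2 σ hσf; omega
      have hσN := hσf.1
      have hσM : σ ∈ M := (Finset.mem_filter.1 hσN).1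
      have hσA : σ ⊆ A := (Finset.mem_filter.1 hσN).2
      have hsd : (σ \ γ).Nonempty := by
        rw [← Finset.card_pos, Finset.card_sdiff_of_subset hγσ]
        have := Finset.card_le_card hγσ
        omega
      obtain ⟨a', ha'⟩ := hsd
      have ha'σ := (Finset.mem_sdiff.1 ha').1
      have ha'γ := (Finset.mem_sdiff.1 ha').2
      have hbγ : b ∉ γ := fun h => hbA (hγA h)
      have haγ : a ∈ γ := Finset.mem_inter.2 ⟨haF, haA⟩
      have hconn : CConnected (link M γ) := hM.2.2 γ hγM (by omega)
      have hbl : ({b} : Finset V) ∈ link M γ := by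
        refine mem_link_iff.2 ⟨pm_sub_mem hMc hF (by simpa using hbF) ⟨b, by simp⟩,
          by simpa [Finset.disjoint_singleton_right] using hbγ, ?_⟩
        refine pm_sub_mem hMc hF (Finset.union_subset hγF (by simpa using hbF)) ?_
        exact ⟨b, Finset.mem_union_right _ (by simp)⟩
      have ha'l : ({a'} : Finset V) ∈ link M γ := by
        refine mem_link_iff.2 ⟨pm_sub_mem hMc hσM (by simpa using ha'σ) ⟨a', by simp⟩,
          by simpa [Finset.disjoint_singleton_right] using ha'γ, ?_⟩
        refine pm_sub_mem hMc hσM (Finset.union_subset hγσ (by simpa using ha'σ)) ?_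
        exact ⟨a', Finset.mem_union_right _ (by simp)⟩
      have hbv : b ∈ vertexSet (link M γ) := mem_vertexSet_of hbl (by simp)
      have ha'v : a' ∈ vertexSet (link M γ) := mem_vertexSet_of ha'l (by simp)
      have hreach := hconn.2 b hbv a' ha'v
      have hfe := hreach.elim fun w =>
        exists_first_entry (edgeGraph (link M γ)) (· ∈ A) w hbA (hσA ha'σ)
      obtain ⟨x, c, hxA, hcA, hxc, hchain⟩ := hfe
      have hxcl : ({x, c} : Finset V) ∈ link M γ := hxc.2
      have hs' : γ ∪ {x, c} ∈ M := (mem_link_iff.1 hxcl).2.2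
      have hdisj := (mem_link_iff.1 hxcl).2.1
      have hcγ : c ∉ γ := fun h => (Finset.disjoint_left.1 hdisj h) (by simp)
      have hxγ : x ∉ γ := fun h => (Finset.disjoint_left.1 hdisj h) (by simp)
      have hr1 : (crossGraph M A).Reachable {a, b} {a, x} :=
        cross_reach_chain hMc hγA haγ hchain
      have haxc : a ∈ γ ∪ {x, c} := Finset.mem_union_left _ haγ
      have hxm : x ∈ γ ∪ {x, c} := Finset.mem_union_right _ (by simp)
      have hcm : c ∈ γ ∪ {x, c} := Finset.mem_union_right _ (by simp)
      have hax : a ≠ x := fun h => hxA (h ▸ haA)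
      have hcx : c ≠ x := fun h => hxA (h ▸ hcA)
      have hr2 : (crossGraph M A).Reachable {a, x} {c, x} := by
        by_cases hac : a = c
        · subst hac; exact SimpleGraph.Reachable.refl _
        · refine SimpleGraph.Adj.reachable ?_
          refine cross_adj hMc hs' (pair_cross hMc hs' haxc hxm haA hxA)
            (pair_cross hMc hs' hcm hxm hcA hxA) (pair_ne_of' hax hac) ?_ ?_
          · rw [union_pair_eq']
            intro z hz; simp at hz
            rcases hz with h | h | h
            · exact h ▸ haxc
            · exact h ▸ hcm
            · exact h ▸ hxm
          · rw [union_pair_eq']; exact card_three hac hax hcx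
      obtain ⟨F', hsubF', hF'f⟩ := exists_facet hs'
      have hcF' : c ∈ F' := hsubF' hcm
      have hxF' : x ∈ F' := hsubF' hxm
      have hkey : d ≤ (F' ∩ A).card + n := by
        have hsub2 : insert c γ ⊆ F' ∩ A := by
          intro z hz
          rcases Finset.mem_insert.1 hz with h | h
          · subst h; exact Finset.mem_inter.2 ⟨hcF', hcA⟩
          · exact Finset.mem_inter.2 ⟨hsubF' (Finset.mem_union_left _ h), hγA h⟩
        have h2 := Finset.card_le_card hsub2
        rw [Finset.card_insert_of_notMem hcγ] at h2
        omega
      obtain ⟨σ', x', a₀, h1, h2, h3, h4, h5, h6, h7, h8⟩ :=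
        ih F' c x hF'f.1 hcF' hcA hxF' hxA hkey
      exact ⟨σ', x', a₀, h1, h2, h3, h4, h5, h6, h7, (hr1.trans hr2).trans h8⟩


lemma union_pair_insert {τ : Finset V} {p q : V} : τ ∪ {p, q} = insert q (insert p τ) := by
  ext z; simp; tauto

lemma side_not_in_A {d : ℕ} (hd : 2 ≤ d) (hN : IsNormalPM (induced M A) (d-1))
    {σ : Finset V} (hσA : σ ⊆ A) (hσc : σ.card = d) {x : V} (hx : x ∉ σ)
    (hxσ : insert x σ ∈ M) : x ∉ A := by
  intro hxA
  have hmem : insert x σ ∈ induced M A :=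
    Finset.mem_filter.2 ⟨hxσ, Finset.insert_subset hxA hσA⟩
  have := card_le_pure hN.1.2.1 hmem
  rw [Finset.card_insert_of_notMem hx, hσc] at this
  omega

lemma ridge_cross {d : ℕ} (hd : 2 ≤ d) (hM : IsNormalPM M d)
    (hN : IsNormalPM (induced M A) (d - 1))
    {τ : Finset V} (hτN : τ ∈ induced M A) (hτc : τ.card = d - 1)
    {a a' : V} (haa' : a ≠ a') (haτ : a ∉ τ) (ha'τ : a' ∉ τ)
    (hσN : insert a τ ∈ induced M A) (hσ'N : insert a' τ ∈ induced M A)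
    (hfacets : ∀ t, IsFacet (induced M A) t → τ ⊆ t → t = insert a τ ∨ t = insert a' τ)
    {x : V} (hxσ : x ∉ insert a τ) (hxM : insert x (insert a τ) ∈ M) :
    ∃ y, y ∉ A ∧ y ∉ insert a' τ ∧ insert y (insert a' τ) ∈ M ∧
      (crossGraph M A).Reachable {a, x} {a', y} := by
  have hMc := hM.1.1
  have hMW := hM.1
  have hNP := hN.1.2.1
  obtain ⟨hτM, hτA⟩ := Finset.mem_filter.1 hτN
  obtain ⟨hσM, hσA⟩ := Finset.mem_filter.1 hσN
  obtain ⟨hσ'M, hσ'A⟩ := Finset.mem_filter.1 hσ'N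
  have haA : a ∈ A := hσA (by simp)
  have ha'A : a' ∈ A := hσ'A (by simp)
  set S := vertexSet (link M τ) with hS
  set G := edgeGraph (link M τ) with hG
  have hτne : τ.Nonempty := by rw [← Finset.card_pos, hτc]; omega
  have huins : ∀ z : V, z ∉ τ → τ ∪ {z} = insert z τ := by
    intro z _; rw [Finset.union_comm, ← Finset.insert_eq]
  have hmemS : ∀ z : V, z ∉ τ → insert z τ ∈ M → z ∈ S := by
    intro z hz hzM
    refine mem_vertexSet_of (mem_link_iff.2 ⟨pm_sub_mem hMc hzM
      (Finset.singleton_subset_iff.2 (Finset.mem_insert_self z τ)) ⟨z, by simp⟩,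
      Finset.disjoint_singleton_right.2 hz, ?_⟩) (by simp)
    rw [huins z hz]; exact hzM
  have hSA : ∀ z ∈ S, z ∈ A → z = a ∨ z = a' := by
    intro z hzS hzA
    have hzl : ({z} : Finset V) ∈ link M τ := (mem_vertexSet_link_iff hMc).1 hzS
    obtain ⟨hz1, hz2, hz3⟩ := mem_link_iff.1 hzl
    have hzτ : z ∉ τ := by simpa [Finset.disjoint_singleton_right] using hz2
    rw [huins z hzτ] at hz3
    have hmemN : insert z τ ∈ induced M A :=
      Finset.mem_filter.2 ⟨hz3, Finset.insert_subset hzA hτA⟩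
    have hcard : (insert z τ).card = d := by
      rw [Finset.card_insert_of_notMem hzτ, hτc]; omega
    have hfz : IsFacet (induced M A) (insert z τ) :=
      facet_of_card hNP hmemN (by omega)
    rcases hfacets _ hfz (Finset.subset_insert _ _) with h | h
    · left
      have : z ∈ insert a τ := h ▸ Finset.mem_insert_self z τ
      rcases Finset.mem_insert.1 this with h' | h'
      · exact h'
      · exact absurd h' hzτ
    · right
      have : z ∈ insert a' τ := h ▸ Finset.mem_insert_self z τ
      rcases Finset.mem_insert.1 this with h' | h'
      · exact h'
      · exact absurd h' hzτ
  have hsub : ∀ p q : V, G.Adj p q → p ∈ S ∧ q ∈ S := by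
    intro p q h
    exact ⟨mem_vertexSet_of h.2 (by simp), mem_vertexSet_of h.2 (by simp)⟩
  have hdeg : ∀ p ∈ S, (S.filter (G.Adj p)).card = 2 := by
    intro p hpS
    have hpl := (mem_vertexSet_link_iff hMc).1 hpS
    obtain ⟨hp1, hp2, hp3⟩ := mem_link_iff.1 hpl
    have hpτ : p ∉ τ := by simpa [Finset.disjoint_singleton_right] using hp2
    rw [huins p hpτ] at hp3
    have hpc : (insert p τ).card = d := by
      rw [Finset.card_insert_of_notMem hpτ, hτc]; omega
    obtain ⟨x₁, x₂, h12, hx1m, hx2m, hF1, hF2, huniq, hbetween⟩ := two_sides hMW hp3 hpc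
    have hximS : ∀ xi : V, xi ∉ insert p τ → IsFacet M (insert xi (insert p τ)) →
        xi ∈ S ∧ G.Adj p xi := by
      intro xi hxim hFi
      have hxiτ : xi ∉ τ := fun h => hxim (Finset.mem_insert_of_mem h)
      have hxip : xi ≠ p := fun h => hxim (h ▸ Finset.mem_insert_self _ _)
      have hadjl : ({p, xi} : Finset V) ∈ link M τ := by
        refine mem_link_iff.2 ⟨pm_sub_mem hMc hFi.1 ?_ ⟨p, by simp⟩, ?_, ?_⟩
        · intro z hz; simp at hz
          rcases hz with h | h
          · exact h ▸ Finset.mem_insert_of_mem (Finset.mem_insert_self _ _)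
          · exact h ▸ Finset.mem_insert_self _ _
        · simp only [Finset.disjoint_insert_right, Finset.disjoint_singleton_right]
          exact ⟨hpτ, hxiτ⟩
        · rw [union_pair_insert]; exact hFi.1
      exact ⟨mem_vertexSet_of hadjl (by simp), ⟨Ne.symm hxip, hadjl⟩⟩
    have hset : S.filter (G.Adj p) = {x₁, x₂} := by
      apply Finset.Subset.antisymm
      · intro w hw
        have hwmem := Finset.mem_filter.1 hw
        have hwS := hwmem.1
        have hpwne : p ≠ w := hwmem.2.1
        have hpwl : ({p, w} : Finset V) ∈ link M τ := hwmem.2.2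
        obtain ⟨hw1, hw2, hw3⟩ := mem_link_iff.1 hpwl
        have hwτ : w ∉ τ := fun h => (Finset.disjoint_left.1 hw2 h) (by simp)
        rw [union_pair_insert] at hw3
        have hwni : w ∉ insert p τ := by simp [hwτ, Ne.symm hpwne]
        rcases hbetween _ hw3 (Finset.subset_insert _ _) with h | h | h
        · exact absurd (h ▸ Finset.mem_insert_self w (insert p τ)) hwni
        · have : w ∈ insert x₁ (insert p τ) := h ▸ Finset.mem_insert_self w _
          rcases Finset.mem_insert.1 this with h' | h'
          · simp [h']
          · exact absurd h' hwni
        · have : w ∈ insert x₂ (insert p τ) := h ▸ Finset.mem_insert_self w _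
          rcases Finset.mem_insert.1 this with h' | h'
          · simp [h']
          · exact absurd h' hwni
      · intro w hw
        rcases Finset.mem_insert.1 hw with h | h
        · obtain ⟨h1, h2⟩ := hximS x₁ hx1m hF1
          rw [h]
          exact Finset.mem_filter.2 ⟨h1, h2⟩
        · rw [Finset.mem_singleton.1 h]
          obtain ⟨h1, h2⟩ := hximS x₂ hx2m hF2
          exact Finset.mem_filter.2 ⟨h1, h2⟩
    rw [hset, Finset.card_pair h12]
  have hconn0 : CConnected (link M τ) := hM.2.2 τ hτM (by omega)
  have haS : a ∈ S := hmemS a haτ hσM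
  have ha'S : a' ∈ S := hmemS a' ha'τ hσ'M
  have hconn : ∀ p ∈ S, G.Reachable p a' := fun p hp => hconn0.2 p hp a' ha'S
  have hnadj : ¬ G.Adj a' a := by
    intro h
    have hl := h.2
    obtain ⟨h1, h2, h3⟩ := mem_link_iff.1 hl
    rw [union_pair_insert] at h3
    have hmemN : insert a (insert a' τ) ∈ induced M A := Finset.mem_filter.2
      ⟨h3, Finset.insert_subset haA (Finset.insert_subset ha'A hτA)⟩
    have := card_le_pure hNP hmemN
    rw [Finset.card_insert_of_notMem (by simp [haa', haτ]),
      Finset.card_insert_of_notMem ha'τ, hτc] at this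
    omega
  have hxτ : x ∉ τ := fun h => hxσ (Finset.mem_insert_of_mem h)
  have hxa : x ≠ a := fun h => hxσ (h ▸ Finset.mem_insert_self _ _)
  have hσcard : (insert a τ).card = d := by
    rw [Finset.card_insert_of_notMem haτ, hτc]; omega
  have hxA : x ∉ A := side_not_in_A hd hN hσA hσcard hxσ hxM
  have hadj_ax : G.Adj a x := by
    refine ⟨fun h => hxa h.symm, mem_link_iff.2 ⟨pm_sub_mem hMc hxM ?_ ⟨a, by simp⟩, ?_, ?_⟩⟩
    · intro z hz; simp at hz
      rcases hz with h | h
      · exact h ▸ Finset.mem_insert_of_mem (Finset.mem_insert_self _ _)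
      · exact h ▸ Finset.mem_insert_self _ _
    · simp only [Finset.disjoint_insert_right, Finset.disjoint_singleton_right]
      exact ⟨haτ, hxτ⟩
    · rw [union_pair_insert]; exact hxM
  obtain ⟨y, hy_adj, hychain⟩ := cycle_cross S G hsub hdeg ha'S haS (Ne.symm haa')
    hnadj hconn hadj_ax
  -- hy_adj : G.Adj a' y
  have hyS : y ∈ S := (hsub a' y hy_adj).2
  have hyA : y ∉ A := by
    intro hyA'
    rcases Relation.ReflTransGen.cases_tail hychain with h | ⟨w, -, hw⟩
    · subst h; exact hxA hyA'
    · rcases hSA y hyS hyA' with h | h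
      · exact hw.2.2.2.2 h
      · exact hw.2.2.2.1 h
  obtain ⟨hy1, hy2, hy3⟩ := mem_link_iff.1 hy_adj.2
  have hyτ : y ∉ τ := fun h => (Finset.disjoint_left.1 hy2 h) (by simp)
  have hya' : y ≠ a' := fun h => hyA (h ▸ ha'A)
  rw [union_pair_insert] at hy3
  have hyni : y ∉ insert a' τ := by simp [hyτ, hya']
  -- now build the cross-graph walk
  obtain ⟨t, ht⟩ := hτne
  have htA : t ∈ A := hτA ht
  have hta : t ≠ a := fun h => haτ (h ▸ ht)
  have hta' : t ≠ a' := fun h => ha'τ (h ▸ ht)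
  have hs₁ : τ ∪ {a, x} ∈ M := by
    rw [union_pair_insert]; exact hxM
  have hr1 : (crossGraph M A).Reachable {a, x} {t, x} := by
    have hts : t ∈ τ ∪ {a, x} := Finset.mem_union_left _ ht
    have has : a ∈ τ ∪ {a, x} := Finset.mem_union_right _ (by simp)
    have hxs : x ∈ τ ∪ {a, x} := Finset.mem_union_right _ (by simp)
    refine SimpleGraph.Adj.reachable ?_
    refine cross_adj hMc hs₁ (pair_cross hMc hs₁ has hxs haA hxA)
      (pair_cross hMc hs₁ hts hxs htA hxA) (pair_ne_of' hxa.symm (Ne.symm hta)) ?_ ?_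
    · rw [union_pair_eq']
      intro z hz; simp at hz
      rcases hz with h | h | h
      · exact h ▸ has
      · exact h ▸ hts
      · exact h ▸ hxs
    · rw [union_pair_eq']
      exact card_three (Ne.symm hta) hxa.symm (fun h => hxA (h ▸ htA))
  have hchain' : Relation.ReflTransGen
      (fun p q => (edgeGraph (link M τ)).Adj p q ∧ p ∉ A ∧ q ∉ A) x y := by
    refine Relation.ReflTransGen.mono ?_ _ _ hychain
    rintro p q ⟨hadj, hpa', hpa, hqa', hqa⟩
    have hpS := (hsub p q hadj).1
    have hqS := (hsub p q hadj).2
    refine ⟨hadj, ?_, ?_⟩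
    · intro hpA
      rcases hSA p hpS hpA with h | h
      · exact hpa h
      · exact hpa' h
    · intro hqA
      rcases hSA q hqS hqA with h | h
      · exact hqa h
      · exact hqa' h
  have hr2 : (crossGraph M A).Reachable {t, x} {t, y} :=
    cross_reach_chain hMc hτA ht hchain'
  have hs₂ : τ ∪ {a', y} ∈ M := by rw [union_pair_insert]; exact hy3
  have hr3 : (crossGraph M A).Reachable {t, y} {a', y} := by
    have hts : t ∈ τ ∪ {a', y} := Finset.mem_union_left _ ht
    have ha's : a' ∈ τ ∪ {a', y} := Finset.mem_union_right _ (by simp)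
    have hys : y ∈ τ ∪ {a', y} := Finset.mem_union_right _ (by simp)
    refine SimpleGraph.Adj.reachable ?_
    refine cross_adj hMc hs₂ (pair_cross hMc hs₂ hts hys htA hyA)
      (pair_cross hMc hs₂ ha's hys ha'A hyA)
      (pair_ne_of' (fun h => hyA (h ▸ htA)) hta') ?_ ?_
    · rw [union_pair_eq']
      intro z hz; simp at hz
      rcases hz with h | h | h
      · exact h ▸ hts
      · exact h ▸ ha's
      · exact h ▸ hys
    · rw [union_pair_eq']
      exact card_three hta' (fun h => hyA (h ▸ htA)) (fun h => hyA (h ▸ ha'A))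
  exact ⟨y, hyA, hyni, hy3, hr1.trans (hr2.trans hr3)⟩

end Aux

/-- If `M[A]` is a `(d-1)`-dimensional normal pseudomanifold induced in the normal
`d`-pseudomanifold `M` (`d ≥ 2`), then the graph on the edges of `M` with exactly one end
in `A` (adjacency: the union is a 2-face of `M`) has at most two connected components. -/
theorem stmt5 {V : Type} [DecidableEq V] (d : ℕ) (hd : 2 ≤ d)
    (M : Finset (Finset V)) (A : Finset V)
    (hM : IsNormalPM M d) (hA : A ⊆ vertexSet M)
    (hN : IsNormalPM (induced M A) (d - 1)) :
    ∃ e f : Finset V, ∀ g ∈ crossEdges M A,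
      (crossGraph M A).Reachable g e ∨ (crossGraph M A).Reachable g f := by
  classical
  have hMc : IsComplex M := hM.1.1
  have hMP : IsPure M d := hM.1.2.1
  have hNW := hN.1
  have hNP : IsPure (induced M A) (d-1) := hN.1.2.1
  obtain ⟨s₀, hs₀⟩ := hNP.1
  obtain ⟨σ₀, hs₀σ, hσ₀f⟩ := exists_facet hs₀
  have hσ₀c : σ₀.card = d := by have := hNP.2 σ₀ hσ₀f; omega
  have hσ₀N := hσ₀f.1
  have hσ₀M : σ₀ ∈ M := (Finset.mem_filter.1 hσ₀N).1
  have hσ₀A : σ₀ ⊆ A := (Finset.mem_filter.1 hσ₀N).2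
  obtain ⟨x₁, x₂, h12, hx1, hx2, hF1, hF2, huniq, hbetween⟩ := two_sides hM.1 hσ₀M hσ₀c
  have hx1A : x₁ ∉ A := side_not_in_A hd hN hσ₀A hσ₀c hx1 hF1.1
  have hx2A : x₂ ∉ A := side_not_in_A hd hN hσ₀A hσ₀c hx2 hF2.1
  obtain ⟨a₀, ha₀⟩ : σ₀.Nonempty := by rw [← Finset.card_pos, hσ₀c]; omega
  refine ⟨{a₀, x₁}, {a₀, x₂}, ?_⟩
  have hside_conn : ∀ (σ : Finset V) (x aa bb : V), σ ⊆ A → x ∉ A →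
      insert x σ ∈ M → aa ∈ σ → bb ∈ σ →
      (crossGraph M A).Reachable {aa, x} {bb, x} := by
    intro σ x aa bb hσA hxA hxM haa hbb
    by_cases hab : aa = bb
    · subst hab; exact SimpleGraph.Reachable.refl _
    · have haam : aa ∈ insert x σ := Finset.mem_insert_of_mem haa
      have hbbm : bb ∈ insert x σ := Finset.mem_insert_of_mem hbb
      have hxm : x ∈ insert x σ := Finset.mem_insert_self _ _
      have haaA : aa ∈ A := hσA haa
      have hbbA : bb ∈ A := hσA hbb
      refine SimpleGraph.Adj.reachable ?_
      refine cross_adj hMc hxM (pair_cross hMc hxM haam hxm haaA hxA)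
        (pair_cross hMc hxM hbbm hxm hbbA hxA)
        (pair_ne_of' (fun h => hxA (h ▸ haaA)) hab) ?_ ?_
      · rw [union_pair_eq']
        intro z hz; simp at hz
        rcases hz with h | h | h
        · exact h ▸ haam
        · exact h ▸ hbbm
        · exact h ▸ hxm
      · rw [union_pair_eq']
        exact card_three hab (fun h => hxA (h ▸ haaA)) (fun h => hxA (h ▸ hbbA))
  have hΦ : ∀ σ : Finset V, Relation.ReflTransGen (DualRel (induced M A) (d-1)) σ σ₀ →
      ∀ a x : V, a ∈ σ → x ∉ σ → x ∉ A → insert x σ ∈ M → σ ⊆ A →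
      (crossGraph M A).Reachable {a, x} {a₀, x₁} ∨
        (crossGraph M A).Reachable {a, x} {a₀, x₂} := by
    intro σ hchain
    induction hchain using Relation.ReflTransGen.head_induction_on with
    | refl =>
      intro a x haσ hxσ hxA hxM _
      have hfacetM : IsFacet M (insert x σ₀) := facet_of_card hMP hxM
        (by rw [Finset.card_insert_of_notMem hxσ, hσ₀c])
      rcases huniq _ hfacetM (Finset.subset_insert _ _) with h | h
      · left
        have hx : x = x₁ := by
          have hmem : x ∈ insert x₁ σ₀ := h ▸ Finset.mem_insert_self x σ₀
          rcases Finset.mem_insert.1 hmem with h' | h'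
          · exact h'
          · exact absurd h' hxσ
        rw [hx]
        exact hside_conn σ₀ x₁ a a₀ hσ₀A hx1A hF1.1 haσ ha₀
      · right
        have hx : x = x₂ := by
          have hmem : x ∈ insert x₂ σ₀ := h ▸ Finset.mem_insert_self x σ₀
          rcases Finset.mem_insert.1 hmem with h' | h'
          · exact h'
          · exact absurd h' hxσ
        rw [hx]
        exact hside_conn σ₀ x₂ a a₀ hσ₀A hx2A hF2.1 haσ ha₀
    | head hstep hrest ih =>
      rename_i σ ρ
      intro a x haσ hxσ hxA hxM hσA
      obtain ⟨hσf, hρf, τ, hτN, hτc, hτσ, hτρ⟩ := hstep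
      have hσc : σ.card = d := by have := hNP.2 σ hσf; omega
      have hρc : ρ.card = d := by have := hNP.2 ρ hρf; omega
      have hρN := hρf.1
      have hρA : ρ ⊆ A := (Finset.mem_filter.1 hρN).2
      by_cases hσρ : σ = ρ
      · rw [hσρ] at haσ hxσ hxM hσA
        exact ih a x haσ hxσ hxA hxM hσA
      · obtain ⟨aσ, haστ, hσeq⟩ := eq_insert_of_card_succ hτσ (by omega)
        obtain ⟨aρ, haρτ, hρeq⟩ := eq_insert_of_card_succ hτρ (by omega)
        obtain ⟨y₁, y₂, k12, hk1, hk2, hK1, hK2, kuniq, -⟩ := two_sides hNW hτN hτc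
        have hfacets0 : ∀ t, IsFacet (induced M A) t → τ ⊆ t → t = σ ∨ t = ρ := by
          intro t htf hτt
          have hσρ' : σ ≠ ρ := hσρ
          rcases kuniq σ hσf hτσ with hσ1 | hσ1 <;>
            rcases kuniq ρ hρf hτρ with hρ1 | hρ1 <;>
            rcases kuniq t htf hτt with ht1 | ht1 <;>
            first
              | exact absurd (hσ1.trans hρ1.symm) hσρ'
              | exact Or.inl (ht1.trans hσ1.symm)
              | exact Or.inr (ht1.trans hρ1.symm)
        have hfacets : ∀ t, IsFacet (induced M A) t → τ ⊆ t →
            t = insert aσ τ ∨ t = insert aρ τ := by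
          intro t htf hτt
          rcases hfacets0 t htf hτt with h | h
          · left; rw [h, ← hσeq]
          · right; rw [h, ← hρeq]
        have haa : aσ ≠ aρ := by
          intro h
          exact hσρ (by rw [hσeq, hρeq, h])
        obtain ⟨y, hyA, hyρ, hyM, hreach⟩ := ridge_cross hd hM hN hτN hτc haa haστ haρτ
          (hσeq ▸ hσf.1) (hρeq ▸ hρf.1) hfacets (hσeq ▸ hxσ) (hσeq ▸ hxM)
        have haσσ : aσ ∈ σ := hσeq ▸ Finset.mem_insert_self _ _
        have hr0 : (crossGraph M A).Reachable {a, x} {aσ, x} :=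
          hside_conn σ x a aσ hσA hxA hxM haσ haσσ
        have haρρ : aρ ∈ ρ := hρeq ▸ Finset.mem_insert_self _ _
        have hyρ' : y ∉ ρ := hρeq ▸ hyρ
        have hyM' : insert y ρ ∈ M := by rw [hρeq]; exact hyM
        rcases ih aρ y haρρ hyρ' hyA hyM' hρA with h | h
        · exact Or.inl ((hr0.trans hreach).trans h)
        · exact Or.inr ((hr0.trans hreach).trans h)
  intro g hg
  have hgmem := Finset.mem_filter.1 hg
  have hgM : g ∈ M := hgmem.1
  have hgc2 : g.card = 2 := hgmem.2.1
  have hgiA : (g ∩ A).card = 1 := hgmem.2.2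
  obtain ⟨a, haeq⟩ := Finset.card_eq_one.1 hgiA
  have hag : a ∈ g ∧ a ∈ A := by
    have : a ∈ g ∩ A := by rw [haeq]; simp
    exact ⟨(Finset.mem_inter.1 this).1, (Finset.mem_inter.1 this).2⟩
  have hsd : (g \ A).card = 1 := by
    have := Finset.card_inter_add_card_sdiff g A
    omega
  obtain ⟨b, hbeq⟩ := Finset.card_eq_one.1 hsd
  have hbg : b ∈ g ∧ b ∉ A := by
    have : b ∈ g \ A := by rw [hbeq]; simp
    exact ⟨(Finset.mem_sdiff.1 this).1, (Finset.mem_sdiff.1 this).2⟩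
  have hab : a ≠ b := fun h => hbg.2 (h ▸ hag.2)
  have hgeq : g = {a, b} := by
    refine (Finset.eq_of_subset_of_card_le ?_ ?_).symm
    · intro z hz
      rcases Finset.mem_insert.1 hz with h | h
      · exact h ▸ hag.1
      · exact (Finset.mem_singleton.1 h) ▸ hbg.1
    · rw [Finset.card_pair hab, hgc2]
  obtain ⟨F, hgF, hFf⟩ := exists_facet hgM
  obtain ⟨σ, x, a₀', h1, h2, h3, h4, h5, h6, h7, h8⟩ :=
    reach_side hd hM hN d F a b hFf.1 (hgF hag.1) hag.2 (hgF hbg.1) hbg.2 (by omega)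
  have hσN : σ ∈ induced M A := Finset.mem_filter.2 ⟨h1, h2⟩
  have hσfacet : IsFacet (induced M A) σ := facet_of_card hNP hσN (by omega)
  have hchain := strong_conn (d-1) (by omega) (induced M A) hN σ σ₀ hσfacet hσ₀f
  have hr : (crossGraph M A).Reachable g {a₀', x} := by
    rw [hgeq]; exact h8
  rcases hΦ σ hchain a₀' x h4 h6 h5 h7 h2 with h | h
  · exact Or.inl (hr.trans h)
  · exact Or.inr (hr.trans h)

end
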